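/- If ρ is nonincreasing on (0,R], p' = -(ρ+p)ζ'/ζ with ζ > 0 increasing, and ζ(R) = √(1-2M/R), then for all r ∈ (0,R]: (p(r)+ρ(r))·ζ(r) ≥ ρ_s·√(1-2M/R), where ρ_s = ρ(R) is the surface density. -/

import Mathlib

open Real Set Filter Topology

lemma antitoneOn_deriv_nonpos_aux {f : ℝ → ℝ} {s : Set ℝ}
    (hf : AntitoneOn f s) {x : ℝ} (hx : x ∈ interior s)
    (hd : DifferentiableAt ℝ f x) : deriv f x ≤ 0 := by
  have h := hd.hasDerivAt
  rw [hasDerivAt_iff_tendsto_slope] at h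
  have h' : Tendsto (slope f x) (𝓝[>] x) (𝓝 (deriv f x)) :=
    h.mono_left (nhdsWithin_mono x fun y hy => ne_of_gt hy)
  refine le_of_tendsto h' ?_
  have hs : ∀ᶠ y in 𝓝[>] x, y ∈ s :=
    eventually_nhdsWithin_of_eventually_nhds
      (Filter.mem_of_superset (isOpen_interior.mem_nhds hx) interior_subset)
  filter_upwards [hs, self_mem_nhdsWithin] with y hy hxy
  have hle : f y ≤ f x := hf (interior_subset hx) hy (le_of_lt (mem_Ioi.mp hxy))
  rw [slope_def_field]
  exact div_nonpos_of_nonpos_of_nonneg (by linarith) (by simp only [mem_Ioi] at hxy; linarith)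

/-- Surface-density bound: with `ρ` nonincreasing,
`(p(r)+ρ(r))ζ(r) ≥ ρ_s √(1-2M/R)` where `ρ_s = ρ(R)`. -/
theorem surface_density_bound
    (R M : ℝ) (hR : 0 < R) (ρ p ζ : ℝ → ℝ)
    (hρanti : AntitoneOn ρ (Ioc 0 R))
    (hζpos : ∀ r ∈ Ioc (0:ℝ) R, 0 < ζ r)
    (hζmono : MonotoneOn ζ (Ioc 0 R))
    (hζR : ζ R = Real.sqrt (1 - 2 * M / R))
    (hpR : p R = 0)
    (hcont : ContinuousOn (fun r => (p r + ρ r) * ζ r) (Icc 0 R))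
    (hρdiff : ∀ r ∈ Ioo (0:ℝ) R, DifferentiableAt ℝ ρ r)
    (hζdiff : ∀ r ∈ Ioo (0:ℝ) R, DifferentiableAt ℝ ζ r)
    (hpdiff : ∀ r ∈ Ioo (0:ℝ) R, DifferentiableAt ℝ p r)
    (hcons : ∀ r ∈ Ioo (0:ℝ) R,
      deriv p r = -((ρ r + p r) * deriv ζ r / ζ r)) :
    ∀ r ∈ Ioc (0:ℝ) R,
      (p r + ρ r) * ζ r ≥ ρ R * Real.sqrt (1 - 2 * M / R) := by
  set f : ℝ → ℝ := fun r => (p r + ρ r) * ζ r with hf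
  have hIooIoc : Ioo (0:ℝ) R ⊆ Ioc 0 R := Ioo_subset_Ioc_self
  have hfd : ∀ r ∈ Ioo (0:ℝ) R, DifferentiableAt ℝ f r := fun r hr =>
    (((hpdiff r hr).add (hρdiff r hr)).mul (hζdiff r hr))
  have hζne : ∀ r ∈ Ioo (0:ℝ) R, ζ r ≠ 0 := fun r hr =>
    ne_of_gt (hζpos r (hIooIoc hr))
  have hderiv : ∀ r ∈ Ioo (0:ℝ) R, deriv f r = deriv ρ r * ζ r := by
    intro r hr
    have : deriv f r = (deriv p r + deriv ρ r) * ζ r + (p r + ρ r) * deriv ζ r := by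
      rw [hf]
      rw [deriv_fun_mul (c := fun y => p y + ρ y) ((hpdiff r hr).add (hρdiff r hr)) (hζdiff r hr),
        deriv_fun_add (hpdiff r hr) (hρdiff r hr)]
    rw [this, hcons r hr]
    field_simp [hζne r hr]
    ring
  have hfanti : AntitoneOn f (Icc 0 R) := by
    apply antitoneOn_of_deriv_nonpos (convex_Icc 0 R) hcont
    · rw [interior_Icc]
      exact fun r hr => (hfd r hr).differentiableWithinAt
    · rw [interior_Icc]
      intro r hr
      rw [hderiv r hr]
      have hρ' : deriv ρ r ≤ 0 := by
        apply antitoneOn_deriv_nonpos_aux hρanti _ (hρdiff r hr)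
        have : Ioo (0:ℝ) R ⊆ interior (Ioc 0 R) := by
          rw [interior_Ioc]
        exact this hr
      exact mul_nonpos_of_nonpos_of_nonneg hρ' (le_of_lt (hζpos r (hIooIoc hr)))
  intro r hr
  have h1 : f R ≤ f r :=
    hfanti ⟨le_of_lt hr.1, hr.2⟩ ⟨le_of_lt hR, le_refl R⟩ hr.2
  have h2 : f R = ρ R * Real.sqrt (1 - 2 * M / R) := by
    simp [hf, hpR, hζR]
  calc ρ R * Real.sqrt (1 - 2 * M / R) = f R := h2.symm
    _ ≤ f r := h1
    _ = (p r + ρ r) * ζ r := rfl
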